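/- For β > -1/2 define the discrete kernel K_β(n) := 0 if |n| - β - 1 ∈ ℕ₀, and K_β(n) := (-1)^{|n|}·Γ(2β+1)/(Γ(1+β+|n|)·Γ(1+β-|n|)) otherwise. Then for β ≥ 0 and j ∈ ℤ, K_β(j) = (2/π)·4^β·(-1)^j·∫_0^{π/2} cos(2jθ)·cos^{2β}θ dθ; in particular K_β(j) are the Fourier coefficients of θ ↦ (4sin²(θ/2))^β on the torus, and Σ_{j∈ℤ} K_β(j) = 0 for β > 0. -/

import Mathlib

open scoped Classical

/-- The kernel of the fractional power `(-Δ_d)^β` of the discrete Laplacian: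
`K_β(n) = 0` if `|n| - β - 1 ∈ ℕ₀`, and
`K_β(n) = (-1)^{|n|} Γ(2β+1) / (Γ(1+β+|n|) Γ(1+β-|n|))` otherwise. -/
noncomputable def fracKernel (β : ℝ) (n : ℤ) : ℝ :=
  if ∃ m : ℕ, (n.natAbs : ℝ) - β - 1 = m then 0
  else (-1 : ℝ) ^ n.natAbs * Real.Gamma (2 * β + 1) /
    (Real.Gamma (1 + β + n.natAbs) * Real.Gamma (1 + β - n.natAbs))

namespace FracKernelAux

open Real MeasureTheory intervalIntegral Set Filter Topology


lemma img_sinsq : (fun θ : ℝ => sin θ ^ 2) '' Ioo 0 (π/2) = Ioo (0:ℝ) 1 := by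
  ext x
  simp only [mem_image, mem_Ioo]
  constructor
  · rintro ⟨θ, ⟨h1, h2⟩, rfl⟩
    have hs : 0 < sin θ := sin_pos_of_pos_of_lt_pi h1 (h2.trans (by linarith [pi_pos]))
    have hs1 : sin θ < 1 := by
      have := Real.cos_pos_of_mem_Ioo ⟨by linarith [pi_pos], h2⟩
      nlinarith [sin_sq_add_cos_sq θ]
    constructor <;> nlinarith
  · rintro ⟨h1, h2⟩
    have hlt : Real.sqrt x < 1 := by
      rw [show (1:ℝ) = Real.sqrt 1 by simp]
      exact Real.sqrt_lt_sqrt h1.le h2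
    refine ⟨Real.arcsin (Real.sqrt x), ⟨?_, ?_⟩, ?_⟩
    · exact Real.arcsin_pos.2 (Real.sqrt_pos.2 h1)
    · exact Real.arcsin_lt_pi_div_two.2 hlt
    · rw [Real.sin_arcsin (by linarith [Real.sqrt_nonneg x]) hlt.le]
      exact Real.sq_sqrt h1.le

lemma inj_sinsq : InjOn (fun θ : ℝ => sin θ ^ 2) (Ioo 0 (π/2)) := by
  intro a ha b hb h
  simp only at h
  have hsa : 0 < sin a := sin_pos_of_pos_of_lt_pi ha.1 (ha.2.trans (by linarith [pi_pos]))
  have hsb : 0 < sin b := sin_pos_of_pos_of_lt_pi hb.1 (hb.2.trans (by linarith [pi_pos]))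
  have : sin a = sin b := by nlinarith
  exact Real.injOn_sin ⟨by linarith [ha.1, pi_pos], by linarith [ha.2]⟩
    ⟨by linarith [hb.1, pi_pos], by linarith [hb.2]⟩ this

lemma subst_beta {β : ℝ} :
    ∫ x in (0:ℝ)..1, x ^ (-(1/2) : ℝ) * (1-x) ^ (β - 1/2) =
      2 * ∫ θ in (0:ℝ)..(π/2), cos θ ^ (2*β) := by
  have hpi : 0 < π/2 := by positivity
  have key := integral_image_eq_integral_abs_deriv_smul (f := fun θ : ℝ => sin θ ^ 2)
    (f' := fun θ : ℝ => 2 * sin θ * cos θ) measurableSet_Ioo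
    (fun θ _ => by
      simpa [Pi.pow_def, mul_comm, mul_assoc, mul_left_comm] using
        ((Real.hasDerivAt_sin θ).pow 2).hasDerivWithinAt)
    inj_sinsq (fun x => x ^ (-(1/2) : ℝ) * (1-x) ^ (β - 1/2))
  rw [img_sinsq] at key
  have h1 : ∫ x in (0:ℝ)..1, x ^ (-(1/2) : ℝ) * (1-x) ^ (β - 1/2) =
      ∫ x in Ioo (0:ℝ) 1, x ^ (-(1/2) : ℝ) * (1-x) ^ (β - 1/2) := by
    rw [intervalIntegral.integral_of_le zero_le_one, ← MeasureTheory.integral_Ioc_eq_integral_Ioo]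
  have h2 : ∫ θ in (0:ℝ)..(π/2), cos θ ^ (2*β) =
      ∫ θ in Ioo (0:ℝ) (π/2), cos θ ^ (2*β) := by
    rw [intervalIntegral.integral_of_le hpi.le, ← MeasureTheory.integral_Ioc_eq_integral_Ioo]
  rw [h1, h2, key, ← MeasureTheory.integral_const_mul]
  apply MeasureTheory.setIntegral_congr_fun measurableSet_Ioo
  intro θ hθ
  have hs : 0 < sin θ := sin_pos_of_pos_of_lt_pi hθ.1 (hθ.2.trans (by linarith [pi_pos]))
  have hc : 0 < cos θ := Real.cos_pos_of_mem_Ioo ⟨by linarith [hθ.1, pi_pos], hθ.2⟩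
  have e1 : (sin θ ^ 2 : ℝ) ^ (-(1/2) : ℝ) = (sin θ)⁻¹ := by
    rw [← Real.rpow_natCast (sin θ) 2, ← Real.rpow_mul hs.le]
    norm_num
    exact Real.rpow_neg_one _
  have e2 : ((1 : ℝ) - sin θ ^ 2) ^ (β - 1/2) = cos θ ^ (2*β - 1) := by
    rw [← Real.cos_sq' θ, ← Real.rpow_natCast (cos θ) 2, ← Real.rpow_mul hc.le]
    norm_num
    ring_nf
  simp only [smul_eq_mul]
  rw [e1, e2, abs_of_nonneg (by positivity)]
  rw [show (2:ℝ) * cos θ ^ (2*β) = 2 * (cos θ ^ (1:ℝ) * cos θ ^ (2*β-1)) by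
    rw [← Real.rpow_add hc]; ring_nf]
  rw [Real.rpow_one]
  field_simp
lemma realBeta {β : ℝ} (hβ : 0 ≤ β) :
    ∫ x in (0:ℝ)..1, x ^ (-(1/2) : ℝ) * (1-x) ^ (β - 1/2) =
      Real.sqrt π * Real.Gamma (β + 1/2) / Real.Gamma (β + 1) := by
  have h := Complex.Gamma_mul_Gamma_eq_betaIntegral (s := (1/2:ℂ)) (t := (β:ℂ)+1/2)
    (by norm_num) (by simp; positivity)
  have hbeta : Complex.betaIntegral (1/2) ((β:ℂ)+1/2) =
      ((∫ x in (0:ℝ)..1, x ^ (-(1/2) : ℝ) * (1-x) ^ (β - 1/2) : ℝ) : ℂ) := by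
    rw [Complex.betaIntegral,
      show (1/2 - 1 : ℂ) = ((-(1/2) : ℝ) : ℂ) by norm_num,
      show ((β:ℂ) + 1/2 - 1) = ((β - 1/2 : ℝ) : ℂ) by push_cast; ring,
      ← intervalIntegral.integral_ofReal]
    apply intervalIntegral.integral_congr
    intro x hx
    rw [uIcc_of_le zero_le_one] at hx
    simp only [Complex.ofReal_mul, Complex.ofReal_cpow hx.1,
      Complex.ofReal_cpow (by linarith [hx.2] : (0:ℝ) ≤ 1 - x)]
    push_cast
    ring
  rw [hbeta] at h
  have h2 : ((Real.Gamma (1/2) * Real.Gamma (β + 1/2) : ℝ) : ℂ) =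
      ((Real.Gamma (β + 1) * ∫ x in (0:ℝ)..1, x ^ (-(1/2) : ℝ) * (1-x) ^ (β - 1/2) : ℝ) : ℂ) := by
    push_cast
    rw [← Complex.Gamma_ofReal, ← Complex.Gamma_ofReal, ← Complex.Gamma_ofReal]
    convert h using 2 <;> push_cast <;> ring
  have h3 : Real.Gamma (1/2) * Real.Gamma (β + 1/2) =
      Real.Gamma (β + 1) * ∫ x in (0:ℝ)..1, x ^ (-(1/2) : ℝ) * (1-x) ^ (β - 1/2) :=
    Complex.ofReal_inj.1 h2
  have hG : Real.Gamma (β + 1) ≠ 0 := (Real.Gamma_pos_of_pos (by linarith)).ne'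
  rw [Real.Gamma_one_half_eq] at h3
  rw [eq_div_iff hG]
  linarith [h3]

lemma base_case {β : ℝ} (hβ : 0 ≤ β) :
    ∫ θ in (0:ℝ)..(π/2), cos θ ^ (2*β) =
      π / (2 * 4^β) * (Real.Gamma (2*β+1) / (Real.Gamma (1+β) * Real.Gamma (1+β))) := by
  have h1 : 2 * ∫ θ in (0:ℝ)..(π/2), cos θ ^ (2*β) =
      Real.sqrt π * Real.Gamma (β + 1/2) / Real.Gamma (β + 1) := by
    rw [← subst_beta, realBeta hβ]
  have hdup := Real.Gamma_mul_Gamma_add_half (β + 1/2)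
  rw [show (β + 1/2) + 1/2 = β + 1 by ring, show 2 * (β + 1/2) = 2*β + 1 by ring,
    show (1 - (2*β+1)) = -(2*β) by ring, Real.rpow_neg (by norm_num : (0:ℝ) ≤ 2)] at hdup
  have hG1 : (0:ℝ) < Real.Gamma (β + 1) := Real.Gamma_pos_of_pos (by linarith)
  have hsq : (0:ℝ) < Real.sqrt π := Real.sqrt_pos.2 pi_pos
  have hp2 : (0:ℝ) < (2:ℝ)^(2*β) := Real.rpow_pos_of_pos (by norm_num) _
  have h4 : (4:ℝ)^β = 2^(2*β) := by
    rw [show (4:ℝ) = 2^(2:ℕ) by norm_num, ← Real.rpow_natCast (2:ℝ) 2,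
      ← Real.rpow_mul (by norm_num)]
    norm_num
  have hsqpi : Real.sqrt π * Real.sqrt π = π := Real.mul_self_sqrt pi_pos.le
  have hGh : Real.Gamma (β + 1/2) = Real.Gamma (2*β+1) * ((2:ℝ)^(2*β))⁻¹ * Real.sqrt π
      / Real.Gamma (β+1) := by
    field_simp at hdup ⊢
    linarith [hdup]
  rw [show (1:ℝ) + β = β + 1 by ring, h4]
  have hI : ∫ θ in (0:ℝ)..(π/2), cos θ ^ (2*β) =
      Real.sqrt π * Real.Gamma (β + 1/2) / (2 * Real.Gamma (β + 1)) := by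
    field_simp at h1 ⊢
    linarith [h1]
  rw [hI, hGh]
  have hG1' := hG1.ne'
  have hp2' := hp2.ne'
  have step : Real.sqrt π * (Real.Gamma (2*β+1) * ((2:ℝ)^(2*β))⁻¹ * Real.sqrt π
        / Real.Gamma (β+1)) / (2 * Real.Gamma (β+1)) =
      (Real.sqrt π * Real.sqrt π) * Real.Gamma (2*β+1)
        / (2 * (2:ℝ)^(2*β) * (Real.Gamma (β+1) * Real.Gamma (β+1))) := by
    field_simp
  rw [step, hsqpi]
  field_simp
lemma cont_cos_rpow {p : ℝ} (hp : 0 ≤ p) : Continuous fun θ : ℝ => cos θ ^ p := by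
  rw [continuous_iff_continuousAt]
  intro θ
  exact (Real.continuousAt_rpow_const _ _ (Or.inr hp)).comp Real.continuous_cos.continuousAt

lemma rpow_succ_nonneg {x : ℝ} (hx : 0 ≤ x) (p : ℝ) (hp : 0 ≤ p) :
    x ^ (p + 1) = x * x ^ p := by
  rcases eq_or_lt_of_le hx with h | h
  · rw [← h, Real.zero_rpow (by positivity), zero_mul]
  · rw [Real.rpow_add h, Real.rpow_one]; ring

lemma I_rec {β : ℝ} (hβ : 0 ≤ β) (n : ℕ) :
    (2*β + 2*n + 2) * (∫ θ in (0:ℝ)..(π/2), cos (2*((n:ℝ)+1)*θ) * cos θ ^ (2*β)) =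
      (2*β - 2*n) * ∫ θ in (0:ℝ)..(π/2), cos (2*(n:ℝ)*θ) * cos θ ^ (2*β) := by
  have hc : Continuous fun θ : ℝ => cos θ ^ (2*β) := cont_cos_rpow (by linarith)
  have hc1 : Continuous fun θ : ℝ => cos θ ^ (2*β+1) := cont_cos_rpow (by linarith)
  set c : ℝ := 2*(n:ℝ)+1 with hc_def
  -- derivative
  have hderiv : ∀ θ : ℝ, HasDerivAt (fun θ => sin (c*θ) * cos θ ^ (2*β+1))
      (c * cos (c*θ) * cos θ ^ (2*β+1) - (2*β+1) * sin (c*θ) * sin θ * cos θ ^ (2*β)) θ := by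
    intro θ
    have h1 : HasDerivAt (fun θ : ℝ => sin (c*θ)) (cos (c*θ) * c) θ := by
      simpa [Function.comp_def] using
        (Real.hasDerivAt_sin (c*θ)).comp θ ((hasDerivAt_id θ).const_mul c)
    have h2 : HasDerivAt (fun θ : ℝ => cos θ ^ (2*β+1))
        ((2*β+1) * cos θ ^ (2*β) * (-sin θ)) θ := by
      have hr := Real.hasDerivAt_rpow_const (x := cos θ) (p := 2*β+1)
        (Or.inr (by linarith))
      have := hr.comp θ (Real.hasDerivAt_cos θ)
      simpa [Function.comp_def, show 2*β+1-1 = 2*β by ring, mul_comm, mul_assoc, mul_left_comm] using this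
    have := h1.fun_mul h2
    exact this.congr_deriv (by ring)
  have hFTC := intervalIntegral.integral_eq_sub_of_hasDerivAt
    (f := fun θ => sin (c*θ) * cos θ ^ (2*β+1)) (a := 0) (b := π/2)
    (fun θ _ => hderiv θ)
    (Continuous.intervalIntegrable (by
      apply Continuous.sub
      · exact (continuous_const.mul (Real.continuous_cos.comp (continuous_const.mul continuous_id))).mul hc1
      · exact (((continuous_const.mul ((Real.continuous_sin.comp (continuous_const.mul continuous_id)))).mul
          Real.continuous_sin)).mul hc) _ _)
  simp only [Real.cos_pi_div_two, Real.sin_zero, Real.zero_rpow (by positivity : 2*β+1 ≠ 0),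
    zero_mul, mul_zero, sub_zero] at hFTC
  -- rewrite the integral
  have hint1 : IntervalIntegrable (fun θ : ℝ => cos (2*((n:ℝ)+1)*θ) * cos θ ^ (2*β))
      volume 0 (π/2) :=
    ((Real.continuous_cos.comp (continuous_const.mul continuous_id)).mul hc).intervalIntegrable _ _
  have hint0 : IntervalIntegrable (fun θ : ℝ => cos (2*(n:ℝ)*θ) * cos θ ^ (2*β))
      volume 0 (π/2) :=
    ((Real.continuous_cos.comp (continuous_const.mul continuous_id)).mul hc).intervalIntegrable _ _
  have hcongr : ∫ θ in (0:ℝ)..(π/2),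
      (c * cos (c*θ) * cos θ ^ (2*β+1) - (2*β+1) * sin (c*θ) * sin θ * cos θ ^ (2*β)) =
      ∫ θ in (0:ℝ)..(π/2), (((n:ℝ)+β+1) * (cos (2*((n:ℝ)+1)*θ) * cos θ ^ (2*β)) +
        ((n:ℝ)-β) * (cos (2*(n:ℝ)*θ) * cos θ ^ (2*β))) := by
    apply intervalIntegral.integral_congr
    intro θ hθ
    rw [uIcc_of_le (by positivity : (0:ℝ) ≤ π/2)] at hθ
    have hcos : 0 ≤ cos θ := Real.cos_nonneg_of_mem_Icc
      ⟨by linarith [hθ.1, pi_pos], hθ.2⟩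
    simp only []
    rw [rpow_succ_nonneg hcos _ (by linarith)]
    rw [show 2*((n:ℝ)+1)*θ = c*θ + θ by rw [hc_def]; ring,
      show 2*(n:ℝ)*θ = c*θ - θ by rw [hc_def]; ring, Real.cos_add, Real.cos_sub]
    ring
  rw [hcongr] at hFTC
  rw [intervalIntegral.integral_add (hint1.const_mul _) (hint0.const_mul _),
    intervalIntegral.integral_const_mul, intervalIntegral.integral_const_mul] at hFTC
  have h0 : (0:ℝ) = ((n:ℝ)+β+1) * (∫ θ in (0:ℝ)..(π/2), cos (2*((n:ℝ)+1)*θ) * cos θ ^ (2*β)) +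
      ((n:ℝ)-β) * ∫ θ in (0:ℝ)..(π/2), cos (2*(n:ℝ)*θ) * cos θ ^ (2*β) := by
    linarith [hFTC]
  linarith [h0]
lemma key {β : ℝ} (hβ : 0 ≤ β) (n : ℕ) :
    ∫ θ in (0:ℝ)..(π/2), cos (2*(n:ℝ)*θ) * cos θ ^ (2*β) =
      π / (2 * 4^β) * (Real.Gamma (2*β+1) /
        (Real.Gamma (1+β+(n:ℝ)) * Real.Gamma (1+β-(n:ℝ)))) := by
  induction n with
  | zero =>
      simp only [Nat.cast_zero, mul_zero, zero_mul, Real.cos_zero, one_mul, add_zero, sub_zero]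
      exact base_case hβ
  | succ n ih =>
      have hrec := I_rec hβ n
      have hpos : (0:ℝ) < 2*β + 2*n + 2 := by positivity
      have hI : ∫ θ in (0:ℝ)..(π/2), cos (2*((n:ℝ)+1)*θ) * cos θ ^ (2*β) =
          (2*β - 2*n)/(2*β + 2*n + 2) *
            ∫ θ in (0:ℝ)..(π/2), cos (2*(n:ℝ)*θ) * cos θ ^ (2*β) := by
        field_simp
        linarith [hrec]
      push_cast
      rw [hI, ih]
      have hA' : Real.Gamma (1+β+((n:ℝ)+1)) = (1+β+(n:ℝ)) * Real.Gamma (1+β+(n:ℝ)) := by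
        rw [show (1:ℝ)+β+((n:ℝ)+1) = (1+β+(n:ℝ)) + 1 by ring,
          Real.Gamma_add_one (by positivity)]
      rw [show (1:ℝ)+β-((n:ℝ)+1) = β-(n:ℝ) by ring, hA']
      by_cases hbn : β - (n:ℝ) = 0
      · rw [show (β:ℝ)-(n:ℝ) = 0 from hbn, Real.Gamma_zero]
        rw [show 2*β - 2*(n:ℝ) = 2*(β - n) by ring, hbn]
        simp
      · have hB : Real.Gamma (1+β-(n:ℝ)) = (β-(n:ℝ)) * Real.Gamma (β-(n:ℝ)) := by
          rw [show (1:ℝ)+β-(n:ℝ) = (β-(n:ℝ)) + 1 by ring, Real.Gamma_add_one hbn]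
        rw [hB]
        by_cases hB' : Real.Gamma (β-(n:ℝ)) = 0
        · simp [hB']
        · have hA : Real.Gamma (1+β+(n:ℝ)) ≠ 0 := (Real.Gamma_pos_of_pos (by positivity)).ne'
          have h4 : (4:ℝ)^β ≠ 0 := (Real.rpow_pos_of_pos (by norm_num) _).ne'
          field_simp
          ring
noncomputable def Kn (β : ℝ) (n : ℕ) : ℝ :=
  (-1:ℝ)^n * Real.Gamma (2*β+1) / (Real.Gamma (1+β+(n:ℝ)) * Real.Gamma (1+β-(n:ℝ)))

noncomputable def gg (β : ℝ) (n : ℕ) : ℝ :=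
  -((-1:ℝ)^n * Real.Gamma (2*β) / (Real.Gamma (β+(n:ℝ)) * Real.Gamma (1+β-(n:ℝ))))

lemma fracKernel_eq {β : ℝ} (hβ : 0 ≤ β) (j : ℤ) :
    fracKernel β j = Kn β j.natAbs := by
  rw [fracKernel, Kn]
  split_ifs with h
  · obtain ⟨k, hk⟩ := h
    rw [show (1:ℝ)+β-(j.natAbs:ℝ) = -(k:ℝ) by linarith, Real.Gamma_neg_nat_eq_zero]
    simp
  · rfl

lemma neg_one_zpow_eq {j : ℤ} : ((-1:ℝ))^j = (-1:ℝ)^j.natAbs := by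
  rcases Int.even_or_odd j with h | h
  · rw [h.neg_one_zpow, (Int.natAbs_even.2 h).neg_one_pow]
  · rw [h.neg_one_zpow, (Int.natAbs_odd.2 h).neg_one_pow]

lemma cos_abs_arg (j : ℤ) (θ : ℝ) : cos (2*(j:ℝ)*θ) = cos (2*(j.natAbs:ℝ)*θ) := by
  rcases Int.natAbs_eq j with h | h
  · have h' : ((j:ℝ)) = (j.natAbs:ℝ) := by
      conv_lhs => rw [h]
      push_cast
      simp [Nat.cast_natAbs]
    rw [h']
  · have h' : ((j:ℝ)) = -(j.natAbs:ℝ) := by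
      conv_lhs => rw [h]
      push_cast
      simp [Nat.cast_natAbs]
    rw [h', show 2 * -(j.natAbs:ℝ) * θ = -(2 * (j.natAbs:ℝ) * θ) by ring, Real.cos_neg]

lemma part1 {β : ℝ} (hβ : 0 ≤ β) (j : ℤ) :
    fracKernel β j = (2 / π) * (4 : ℝ) ^ β * (-1 : ℝ) ^ j.natAbs *
      ∫ θ in (0 : ℝ)..(π / 2), Real.cos (2 * (j : ℝ) * θ) * Real.cos θ ^ (2 * β) := by
  have habs : (∫ θ in (0:ℝ)..(π/2), cos (2*(j:ℝ)*θ) * cos θ ^ (2*β)) =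
      ∫ θ in (0:ℝ)..(π/2), cos (2*(j.natAbs:ℝ)*θ) * cos θ ^ (2*β) := by
    apply intervalIntegral.integral_congr
    intro θ _
    simp only []
    rw [cos_abs_arg]
  rw [habs, key hβ, fracKernel_eq hβ, Kn, mul_div_assoc]
  have hπ : (π:ℝ) ≠ 0 := pi_ne_zero
  have h4 : (4:ℝ)^β ≠ 0 := (Real.rpow_pos_of_pos (by norm_num) _).ne'
  set D := Real.Gamma (2*β+1) / (Real.Gamma (1+β+(j.natAbs:ℝ)) * Real.Gamma (1+β-(j.natAbs:ℝ)))
  field_simp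

lemma part2integral {β : ℝ} (hβ : 0 ≤ β) (j : ℤ) :
    (∫ θ in (-π)..π, cos ((j:ℝ)*θ) * (4 * sin (θ/2)^2)^β) =
      4 * 4^β * (-1:ℝ)^j.natAbs * ∫ θ in (0:ℝ)..(π/2), cos (2*(j:ℝ)*θ) * cos θ ^ (2*β) := by
  have hgc : Continuous fun θ : ℝ => cos ((j:ℝ)*θ) * (4 * sin (θ/2)^2)^β := by
    apply Continuous.mul
    · exact Real.continuous_cos.comp (continuous_const.mul continuous_id)
    · rw [continuous_iff_continuousAt]
      intro θ
      exact (Real.continuousAt_rpow_const _ _ (Or.inr hβ)).comp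
        (by fun_prop : ContinuousAt (fun θ : ℝ => 4 * sin (θ/2)^2) θ)
  set g : ℝ → ℝ := fun θ => cos ((j:ℝ)*θ) * (4 * sin (θ/2)^2)^β with hg
  -- even
  have heven : (∫ θ in (-π)..(0:ℝ), g θ) = ∫ θ in (0:ℝ)..π, g θ := by
    have : (∫ θ in (0:ℝ)..π, g (-θ)) = ∫ θ in (-π)..(0:ℝ), g θ := by
      simpa using intervalIntegral.integral_comp_neg (a := (0:ℝ)) (b := π) g
    rw [← this]
    apply intervalIntegral.integral_congr
    intro θ _
    simp only [hg]
    rw [show (j:ℝ) * -θ = -((j:ℝ)*θ) by ring, Real.cos_neg,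
      show -θ/2 = -(θ/2) by ring, Real.sin_neg]
    ring_nf
  have hsplit : (∫ θ in (-π)..π, g θ) = 2 * ∫ θ in (0:ℝ)..π, g θ := by
    rw [← intervalIntegral.integral_add_adjacent_intervals
      (hgc.intervalIntegrable (-π) 0) (hgc.intervalIntegrable 0 π), heven]
    ring
  -- double angle substitution
  have hdouble : (∫ θ in (0:ℝ)..π, g θ) = 2 * ∫ u in (0:ℝ)..(π/2), g (2*u) := by
    rw [intervalIntegral.integral_comp_mul_left g (by norm_num : (2:ℝ) ≠ 0),
      show (2:ℝ)*(π/2) = π by ring, show (2:ℝ)*(0:ℝ) = 0 by ring, smul_eq_mul]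
    ring
  have hrefl : (∫ u in (0:ℝ)..(π/2), g (2*u)) =
      ∫ u in (0:ℝ)..(π/2), g (2*(π/2 - u)) := by
    have := intervalIntegral.integral_comp_sub_left (a := (0:ℝ)) (b := π/2)
      (fun u => g (2*u)) (π/2)
    simp only [sub_zero, sub_self] at this
    rw [← this]
  have hfinal : (∫ u in (0:ℝ)..(π/2), g (2*(π/2 - u))) =
      4^β * (-1:ℝ)^j.natAbs * ∫ θ in (0:ℝ)..(π/2), cos (2*(j:ℝ)*θ) * cos θ ^ (2*β) := by
    rw [← intervalIntegral.integral_const_mul]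
    apply intervalIntegral.integral_congr
    intro θ hθ
    rw [uIcc_of_le (by positivity : (0:ℝ) ≤ π/2)] at hθ
    have hcos : 0 ≤ cos θ := Real.cos_nonneg_of_mem_Icc ⟨by linarith [hθ.1, pi_pos], hθ.2⟩
    simp only [hg]
    rw [show (j:ℝ) * (2*(π/2 - θ)) = (j:ℝ)*π - 2*(j:ℝ)*θ by ring,
      Real.cos_int_mul_pi_sub, show 2*(π/2 - θ)/2 = π/2 - θ by ring,
      Real.sin_pi_div_two_sub]
    rw [show (4:ℝ) * cos θ^2 = (2*cos θ)^2 by ring]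
    rw [show ((2:ℝ)*cos θ)^2 = ((2*cos θ):ℝ)^((2:ℕ):ℝ) from (Real.rpow_natCast _ 2).symm,
      ← Real.rpow_mul (by linarith : (0:ℝ) ≤ 2*cos θ)]
    rw [Real.mul_rpow (by norm_num : (0:ℝ) ≤ 2) hcos]
    rw [neg_one_zpow_eq]
    push_cast
    rw [show (2:ℝ)^(2*β) = 4^β by
      rw [show (4:ℝ) = 2^(2:ℕ) by norm_num, ← Real.rpow_natCast (2:ℝ) 2,
        ← Real.rpow_mul (by norm_num)]
      norm_num]
    ring
  rw [hsplit, hdouble, hrefl, hfinal]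
  ring
lemma tele {β : ℝ} (hβ : 0 < β) (n : ℕ) : Kn β n = gg β (n+1) - gg β n := by
  have hbn : (0:ℝ) < β + n := by positivity
  have hG1 : (0:ℝ) < Real.Gamma (β+(n:ℝ)) := Real.Gamma_pos_of_pos hbn
  have hGa : Real.Gamma (β+((n:ℝ)+1)) = (β+n) * Real.Gamma (β+(n:ℝ)) := by
    rw [show β+((n:ℝ)+1) = (β+(n:ℝ))+1 by ring, Real.Gamma_add_one hbn.ne']
  have hG2 : Real.Gamma (2*β+1) = 2*β * Real.Gamma (2*β) := by
    rw [Real.Gamma_add_one (by positivity)]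
  have hGb : Real.Gamma (1+β+(n:ℝ)) = (β+n) * Real.Gamma (β+(n:ℝ)) := by
    rw [show (1:ℝ)+β+(n:ℝ) = (β+(n:ℝ))+1 by ring, Real.Gamma_add_one hbn.ne']
  rw [Kn, gg, gg]
  push_cast
  by_cases hy : β - (n:ℝ) = 0
  · have hn2 : (n:ℝ) = β := by linarith
    rw [show (1:ℝ)+β-((n:ℝ)+1) = β - (n:ℝ) by ring, hy, Real.Gamma_zero]
    rw [show (1:ℝ)+β-(n:ℝ) = 1 by rw [hn2]; ring, Real.Gamma_one]
    rw [hGb, hG2, show β+(n:ℝ) = 2*β by rw [hn2]; ring]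
    field_simp
    simp
  · have hGc : Real.Gamma (1+β-(n:ℝ)) = (β-n) * Real.Gamma (β-(n:ℝ)) := by
      rw [show (1:ℝ)+β-(n:ℝ) = (β-(n:ℝ))+1 by ring, Real.Gamma_add_one hy]
    rw [show (1:ℝ)+β-((n:ℝ)+1) = β - (n:ℝ) by ring, hGa, hGb, hGc, hG2, pow_succ]
    by_cases hGz : Real.Gamma (β-(n:ℝ)) = 0
    · simp [hGz]
    · field_simp
      ring

lemma ratio {β : ℝ} (hβ : 0 < β) {n : ℕ} (hn : β < n) :
    gg β (n+1) = (((n:ℝ)-β)/((n:ℝ)+β)) * gg β n := by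
  have hbn : (0:ℝ) < β + n := by positivity
  have hy : β - (n:ℝ) ≠ 0 := by
    intro h; linarith
  have hGa : Real.Gamma (β+((n:ℝ)+1)) = (β+n) * Real.Gamma (β+(n:ℝ)) := by
    rw [show β+((n:ℝ)+1) = (β+(n:ℝ))+1 by ring, Real.Gamma_add_one hbn.ne']
  have hGc : Real.Gamma (1+β-(n:ℝ)) = (β-n) * Real.Gamma (β-(n:ℝ)) := by
    rw [show (1:ℝ)+β-(n:ℝ) = (β-(n:ℝ))+1 by ring, Real.Gamma_add_one hy]
  rw [gg, gg]
  push_cast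
  rw [show (1:ℝ)+β-((n:ℝ)+1) = β - (n:ℝ) by ring, hGa, hGc, pow_succ]
  by_cases hGz : Real.Gamma (β-(n:ℝ)) = 0
  · simp [hGz]
  · have hG1 : Real.Gamma (β+(n:ℝ)) ≠ 0 := (Real.Gamma_pos_of_pos hbn).ne'
    field_simp
    ring

lemma abs_ratio {β : ℝ} (hβ : 0 < β) {n : ℕ} (hn : β < n) :
    |gg β (n+1)| = (((n:ℝ)-β)/((n:ℝ)+β)) * |gg β n| := by
  have hr0 : (0:ℝ) ≤ ((n:ℝ)-β)/((n:ℝ)+β) := by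
    apply div_nonneg <;> [linarith; positivity]
  rw [ratio hβ hn, abs_mul, abs_of_nonneg hr0]

lemma absKn {β : ℝ} (hβ : 0 < β) {n : ℕ} (hn : β < n) :
    |Kn β n| = |gg β n| - |gg β (n+1)| := by
  have hr0 : (0:ℝ) ≤ ((n:ℝ)-β)/((n:ℝ)+β) := by
    apply div_nonneg <;> [linarith; positivity]
  have hr1 : ((n:ℝ)-β)/((n:ℝ)+β) ≤ 1 := by
    rw [div_le_one (by positivity)]; linarith
  rw [tele hβ n, abs_ratio hβ hn, ratio hβ hn]
  rw [show (((n:ℝ)-β)/((n:ℝ)+β)) * gg β n - gg β n = ((((n:ℝ)-β)/((n:ℝ)+β)) - 1) * gg β n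
    by ring, abs_mul, abs_of_nonpos (by linarith : (((n:ℝ)-β)/((n:ℝ)+β)) - 1 ≤ 0)]
  ring
section main
variable {β : ℝ} (hβ : 0 < β)

lemma hn0 (k : ℕ) : β < (k + (⌈β⌉₊ + 1) : ℕ) := by
  have h1 : β ≤ ⌈β⌉₊ := Nat.le_ceil β
  have h2 : (⌈β⌉₊ : ℝ) < ((k + (⌈β⌉₊ + 1) : ℕ) : ℝ) := by
    push_cast; linarith [Nat.cast_nonneg (α := ℝ) k]
  linarith

include hβ in
lemma A_antitone : Antitone (fun k : ℕ => |gg β (k + (⌈β⌉₊ + 1))|) := by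
  apply antitone_nat_of_succ_le
  intro k
  have h := abs_ratio hβ (hn0 (β := β) k)
  have hk := hn0 (β := β) k
  calc |gg β (k + 1 + (⌈β⌉₊ + 1))| = |gg β ((k + (⌈β⌉₊ + 1)) + 1)| := by ring_nf
    _ = ((((k + (⌈β⌉₊ + 1) : ℕ):ℝ)-β)/(((k + (⌈β⌉₊ + 1) : ℕ):ℝ)+β)) *
        |gg β (k + (⌈β⌉₊ + 1))| := h
    _ ≤ 1 * |gg β (k + (⌈β⌉₊ + 1))| := by
        apply mul_le_mul_of_nonneg_right _ (abs_nonneg _)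
        rw [div_le_one (by linarith)]
        linarith
    _ = |gg β (k + (⌈β⌉₊ + 1))| := one_mul _

include hβ in
lemma sumAbsKn : ∀ N : ℕ, ∑ k ∈ Finset.range N, |Kn β (k + (⌈β⌉₊ + 1))| =
    |gg β (⌈β⌉₊ + 1)| - |gg β (N + (⌈β⌉₊ + 1))| := by
  intro N
  have : ∀ k, |Kn β (k + (⌈β⌉₊ + 1))| =
      (fun i => |gg β (i + (⌈β⌉₊ + 1))|) k - (fun i => |gg β (i + (⌈β⌉₊ + 1))|) (k+1) := by
    intro k
    simp only []
    rw [absKn hβ (hn0 (β := β) k), show k + 1 + (⌈β⌉₊ + 1) = (k + (⌈β⌉₊ + 1)) + 1 by ring]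
  calc ∑ k ∈ Finset.range N, |Kn β (k + (⌈β⌉₊ + 1))|
      = ∑ k ∈ Finset.range N, ((fun i => |gg β (i + (⌈β⌉₊ + 1))|) k -
          (fun i => |gg β (i + (⌈β⌉₊ + 1))|) (k+1)) := Finset.sum_congr rfl (fun k _ => this k)
    _ = |gg β (0 + (⌈β⌉₊ + 1))| - |gg β (N + (⌈β⌉₊ + 1))| := Finset.sum_range_sub' _ N
    _ = |gg β (⌈β⌉₊ + 1)| - |gg β (N + (⌈β⌉₊ + 1))| := by norm_num

include hβ in
lemma summableAbsKn : Summable (fun n : ℕ => |Kn β n|) := by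
  rw [← summable_nat_add_iff (⌈β⌉₊ + 1)]
  apply summable_of_sum_range_le (c := |gg β (⌈β⌉₊ + 1)|) (fun n => abs_nonneg _)
  intro N
  rw [sumAbsKn hβ N]
  have := abs_nonneg (gg β (N + (⌈β⌉₊ + 1)))
  linarith

include hβ in
lemma gg_tendsto_zero : Tendsto (fun n : ℕ => gg β n) atTop (nhds 0) := by
  set n₀ := ⌈β⌉₊ + 1 with hn₀
  set A : ℕ → ℝ := fun k => |gg β (k + n₀)| with hA
  have hanti : Antitone A := A_antitone hβ
  have hbdd : BddBelow (range A) := ⟨0, by rintro x ⟨k, rfl⟩; exact abs_nonneg _⟩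
  have htend : Tendsto A atTop (nhds (⨅ k, A k)) := tendsto_atTop_ciInf hanti hbdd
  set m := ⨅ k, A k with hm
  have hm0 : 0 ≤ m := le_ciInf (fun k => abs_nonneg _)
  have hmle : ∀ k, m ≤ A k := fun k => ciInf_le hbdd k
  have hmzero : m = 0 := by
    by_contra hne
    have hmpos : 0 < m := lt_of_le_of_ne hm0 (Ne.symm hne)
    -- the telescoping differences are summable
    have hsum : Summable (fun k : ℕ => A k - A (k+1)) := by
      apply summable_of_sum_range_le (c := A 0)
        (fun k => by have := hanti (Nat.le_succ k); linarith)
      intro N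
      rw [Finset.sum_range_sub' A N]
      have := abs_nonneg (gg β (N + n₀)); simp only [hA] at this ⊢
      linarith
    -- comparison with harmonic
    have hcomp : ∀ k : ℕ, 2*β*m/((k:ℝ) + n₀ + β) ≤ A k - A (k+1) := by
      intro k
      have hk : β < ((k + n₀ : ℕ) : ℝ) := hn0 (β := β) k
      have hkn : ((k + n₀ : ℕ) : ℝ) = (k:ℝ) + n₀ := by push_cast; ring
      have h := abs_ratio hβ (hk)
      have hApos : m ≤ A k := hmle k
      have hden : (0:ℝ) < (k:ℝ) + n₀ + β := by positivity
      have : A (k+1) = ((((k:ℝ) + n₀)-β)/(((k:ℝ) + n₀)+β)) * A k := by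
        simp only [hA]
        rw [show k + 1 + n₀ = (k + n₀) + 1 by ring, h, hkn]
      rw [this]
      have hr : 1 - (((k:ℝ) + n₀)-β)/(((k:ℝ) + n₀)+β) = 2*β/((k:ℝ) + n₀ + β) := by
        field_simp
        ring
      have e : A k - (((k:ℝ) + n₀)-β)/(((k:ℝ) + n₀)+β) * A k
          = (2*β/((k:ℝ) + n₀ + β)) * A k := by
        rw [← hr]; ring
      rw [e, div_mul_eq_mul_div, div_le_div_iff₀ hden hden]
      have h2β : (0:ℝ) < 2*β := by linarith
      have := mul_le_mul_of_nonneg_left (mul_le_mul_of_nonneg_right (hmle k) hden.le) h2β.le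
      calc 2*β*m*((k:ℝ)+↑n₀+β) = 2*β*(m*((k:ℝ)+↑n₀+β)) := by ring
        _ ≤ 2*β*(A k*((k:ℝ)+↑n₀+β)) := this
        _ = 2*β*A k*((k:ℝ)+↑n₀+β) := by ring
    have hsum2 : Summable (fun k : ℕ => 2*β*m/((k:ℝ) + n₀ + β)) :=
      Summable.of_nonneg_of_le (fun k => by positivity) hcomp hsum
    -- but this is not summable
    have hnotsum : ¬ Summable (fun k : ℕ => 2*β*m/((k:ℝ) + n₀ + β)) := by
      intro hs
      have hne' : (2*β*m) ≠ 0 := by positivity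
      have h1 : Summable (fun k : ℕ => ((k:ℝ) + n₀ + β)⁻¹) := by
        refine (hs.mul_left (2*β*m)⁻¹).congr fun k => ?_
        field_simp
      have hn₀1 : (1:ℝ) ≤ (n₀:ℝ) := by
        rw [hn₀]; push_cast; linarith [Nat.cast_nonneg (α := ℝ) ⌈β⌉₊]
      have h3 : Summable (fun k : ℕ => ((k:ℝ) + 1)⁻¹) := by
        apply Summable.of_nonneg_of_le (fun k => by positivity) (fun k => ?_)
          (h1.mul_left ((n₀:ℝ)+β))
        have hd1 : (0:ℝ) < (k:ℝ)+1 := by positivity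
        have hd2 : (0:ℝ) < (k:ℝ)+↑n₀+β := by positivity
        rw [← div_eq_mul_inv, ← one_div, div_le_div_iff₀ hd1 hd2]
        nlinarith [Nat.cast_nonneg (α := ℝ) k]
      apply Real.not_summable_natCast_inv
      have h5 : Summable (fun k : ℕ => (((k+1:ℕ)):ℝ)⁻¹) := by
        refine h3.congr fun k => ?_
        push_cast; ring
      exact (summable_nat_add_iff 1).mp h5
    exact hnotsum hsum2
  rw [hmzero] at htend
  have : Tendsto (fun k : ℕ => gg β (k + n₀)) atTop (nhds 0) :=
    squeeze_zero_norm (fun k => le_of_eq (Real.norm_eq_abs _)) htend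
  exact (tendsto_add_atTop_iff_nat n₀).1 this

end main
lemma hasSumKn {β : ℝ} (hβ : 0 < β) : HasSum (fun n : ℕ => Kn β n) (-(gg β 0)) := by
  have hsummable : Summable (fun n : ℕ => Kn β n) := summable_abs_iff.mp (summableAbsKn hβ)
  have h := hsummable.hasSum
  have htend := h.tendsto_sum_nat
  have hps : ∀ N, ∑ i ∈ Finset.range N, Kn β i = gg β N - gg β 0 := by
    intro N
    rw [Finset.sum_congr rfl (fun i _ => tele hβ i)]
    exact Finset.sum_range_sub (gg β) N
  have htend2 : Tendsto (fun N => ∑ i ∈ Finset.range N, Kn β i) atTop (nhds (-(gg β 0))) := by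
    simp_rw [hps]
    simpa using (gg_tendsto_zero hβ).sub_const (gg β 0)
  rwa [tendsto_nhds_unique htend htend2] at h

lemma zero_val {β : ℝ} (hβ : 0 < β) : -(gg β 0) + (-(gg β 0) - Kn β 0) = 0 := by
  have hGb : (0:ℝ) < Real.Gamma β := Real.Gamma_pos_of_pos hβ
  have hGb1 : (0:ℝ) < Real.Gamma (1+β) := Real.Gamma_pos_of_pos (by linarith)
  have h1 : Real.Gamma (1+β) = β * Real.Gamma β := by
    rw [show (1:ℝ)+β = β+1 by ring, Real.Gamma_add_one hβ.ne']
  have h2 : Real.Gamma (2*β+1) = 2*β * Real.Gamma (2*β) := Real.Gamma_add_one (by positivity)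
  rw [Kn, gg]
  push_cast
  simp only [pow_zero, one_mul, add_zero, sub_zero]
  rw [h2, h1]
  field_simp
  ring

lemma int_hasSum {β : ℝ} (hβ : 0 < β) : HasSum (fun j : ℤ => fracKernel β j) 0 := by
  have hnat : HasSum (fun n : ℕ => fracKernel β (n : ℤ)) (-(gg β 0)) := by
    refine (hasSumKn hβ).congr_fun fun n => ?_
    rw [fracKernel_eq hβ.le, Int.natAbs_natCast]
  have hneg : HasSum (fun n : ℕ => fracKernel β (-((n:ℤ) + 1))) (-(gg β 0) - Kn β 0) := by
    have h := (hasSum_nat_add_iff' (f := fun n : ℕ => fracKernel β (n : ℤ)) 1).mpr hnat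
    simp only [Finset.sum_range_one] at h
    have h0 : fracKernel β ((0:ℕ) : ℤ) = Kn β 0 := by
      rw [fracKernel_eq hβ.le]; norm_num
    rw [h0] at h
    refine h.congr_fun fun n => ?_
    rw [fracKernel_eq hβ.le, fracKernel_eq hβ.le]
    congr 1
  have := hnat.of_nat_of_neg_add_one hneg
  rwa [zero_val hβ] at this

end FracKernelAux

open FracKernelAux in
open Real in
theorem fracKernel_fourier (β : ℝ) (hβ : 0 ≤ β) :
    (∀ j : ℤ, fracKernel β j = (2 / π) * (4 : ℝ) ^ β * (-1 : ℝ) ^ j.natAbs *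
        ∫ θ in (0 : ℝ)..(π / 2), Real.cos (2 * (j : ℝ) * θ) * Real.cos θ ^ (2 * β)) ∧
    (∀ j : ℤ, fracKernel β j = (1 / (2 * π)) *
        ∫ θ in (-π)..π, Real.cos ((j : ℝ) * θ) * (4 * Real.sin (θ / 2) ^ 2) ^ β) ∧
    (0 < β → Summable (fun j : ℤ => fracKernel β j) ∧ ∑' j : ℤ, fracKernel β j = 0) := by
  refine ⟨fun j => part1 hβ j, fun j => ?_, fun hpos => ?_⟩
  · rw [part2integral hβ j, part1 hβ j]
    have hπ : (π:ℝ) ≠ 0 := pi_ne_zero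
    field_simp
    ring
  · exact ⟨(int_hasSum hpos).summable, (int_hasSum hpos).tsum_eq⟩
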